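/- Let c_1, …, c_n be one-time simple coins with c_i = (P_i, μ_i), 0 < P_i < 1, rates r_i = μ_i/P_i, and let E > 0 be a penalty. Let l* be a list consisting of exactly those coins c_i with r_i < E, arranged in nondecreasing order of rate. Then for every list l of pairwise distinct coins chosen from {c_1, …, c_n} (any subset, in any order), COST(l*, E) ≤ COST(l, E). That is, an optimal strategy when the player may stop at any time is to toss exactly the coins whose rate is smaller than E, in nondecreasing order of rate. -/

import Mathlib

/-- Expected cost of tossing a list of simple coins `(P, μ)` in order,
paying the penalty `E` if all tosses fail. -/
noncomputable def listCost (l : List (ℝ × ℝ)) (E : ℝ) : ℝ :=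
  l.foldr (fun c a => c.2 + (1 - c.1) * a) E

namespace CoinAux

variable {n : ℕ}

lemma cost_cons (x : ℝ × ℝ) (L : List (ℝ × ℝ)) (E : ℝ) :
    listCost (x :: L) E = x.2 + (1 - x.1) * listCost L E := rfl

lemma cost_le_E (c : Fin n → ℝ × ℝ)
    (hP : ∀ i, 0 < (c i).1 ∧ (c i).1 < 1) (E : ℝ) :
    ∀ l : List (Fin n), (∀ i ∈ l, (c i).2 / (c i).1 < E) →
      listCost (l.map c) E ≤ E := by
  intro l
  induction l with
  | nil => intro _; simp [listCost]
  | cons a t ih =>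
    intro h
    have hPa := (hP a).1
    have hPa1 := (hP a).2
    have ht := ih (fun i hi => h i (List.mem_cons_of_mem _ hi))
    have hra : (c a).2 / (c a).1 < E := h a (List.mem_cons_self)
    have hμa : (c a).2 < E * (c a).1 := (div_lt_iff₀ hPa).mp hra
    simp only [List.map_cons, cost_cons]
    nlinarith

lemma cost_swap (c : Fin n → ℝ × ℝ)
    (hP : ∀ i, 0 < (c i).1 ∧ (c i).1 < 1)
    (a b : Fin n) (L : List (ℝ × ℝ)) (E : ℝ)
    (hr : (c a).2 / (c a).1 ≤ (c b).2 / (c b).1) :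
    listCost (c a :: c b :: L) E ≤ listCost (c b :: c a :: L) E := by
  have hPa := (hP a).1
  have hPb := (hP b).1
  have key : (c a).2 * (c b).1 ≤ (c b).2 * (c a).1 :=
    (div_le_div_iff₀ hPa hPb).mp hr
  simp only [cost_cons]
  nlinarith

lemma cost_bubble (c : Fin n → ℝ × ℝ)
    (hP : ∀ i, 0 < (c i).1 ∧ (c i).1 < 1) (E : ℝ) (b : Fin n) :
    ∀ u v : List (Fin n), (∀ a ∈ u, (c a).2 / (c a).1 ≤ (c b).2 / (c b).1) →
      listCost ((u ++ b :: v).map c) E ≤ listCost ((b :: (u ++ v)).map c) E := by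
  intro u
  induction u with
  | nil => intro v _; simp
  | cons a u' ih =>
    intro v h
    have hPa := (hP a).1
    have hPa1 := (hP a).2
    have h1 := ih v (fun x hx => h x (List.mem_cons_of_mem _ hx))
    calc listCost (((a :: u') ++ b :: v).map c) E
        = (c a).2 + (1 - (c a).1) * listCost ((u' ++ b :: v).map c) E := rfl
      _ ≤ (c a).2 + (1 - (c a).1) * listCost ((b :: (u' ++ v)).map c) E := by
          nlinarith
      _ = listCost (c a :: c b :: ((u' ++ v).map c)) E := rfl
      _ ≤ listCost (c b :: c a :: ((u' ++ v).map c)) E :=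
          cost_swap c hP a b _ E (h a (List.mem_cons_self))
      _ = listCost ((b :: ((a :: u') ++ v)).map c) E := rfl

lemma main (c : Fin n → ℝ × ℝ)
    (hP : ∀ i, 0 < (c i).1 ∧ (c i).1 < 1) (hμ : ∀ i, 0 ≤ (c i).2)
    (E : ℝ) (hE : 0 < E) :
    ∀ l : List (Fin n), l.Nodup → ∀ ls : List (Fin n), ls.Nodup →
      (∀ i ∈ ls, (c i).2 / (c i).1 < E) →
      (∀ i ∈ l, (c i).2 / (c i).1 < E → i ∈ ls) →
      ((ls.map (fun i => (c i).2 / (c i).1)).Pairwise (· ≤ ·)) →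
      listCost (ls.map c) E ≤ listCost (l.map c) E := by
  intro l
  induction l with
  | nil =>
    intro _ ls _ hlt _ _
    simpa [listCost] using cost_le_E c hP E ls hlt
  | cons b t ih =>
    intro hnd ls hndls hlt hmem hsort
    have hbt : b ∉ t := (List.nodup_cons.mp hnd).1
    have hndt : t.Nodup := (List.nodup_cons.mp hnd).2
    have hPb := (hP b).1
    have hPb1 := (hP b).2
    rcases lt_or_ge ((c b).2 / (c b).1) E with hrb | hrb
    · -- b ∈ ls
      have hbls : b ∈ ls := hmem b (List.mem_cons_self) hrb
      obtain ⟨u, v, rfl⟩ := List.append_of_mem hbls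
      have hsubl : List.Sublist (u ++ v) (u ++ b :: v) :=
        (List.sublist_cons_self b v).append_left u
      have hnd' : (u ++ v).Nodup := hndls.sublist hsubl
      have hlt' : ∀ i ∈ u ++ v, (c i).2 / (c i).1 < E :=
        fun i hi => hlt i (hsubl.mem hi)
      have hsort' : ((u ++ v).map (fun i => (c i).2 / (c i).1)).Pairwise (· ≤ ·) :=
        List.Pairwise.sublist (hsubl.map _) hsort
      have hmem' : ∀ i ∈ t, (c i).2 / (c i).1 < E → i ∈ u ++ v := by
        intro i hi hri
        have hib : i ≠ b := fun h => hbt (h ▸ hi)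
        have := hmem i (List.mem_cons_of_mem _ hi) hri
        rcases List.mem_append.mp this with h | h
        · exact List.mem_append.mpr (Or.inl h)
        · rcases List.mem_cons.mp h with h | h
          · exact absurd h hib
          · exact List.mem_append.mpr (Or.inr h)
      have hIH := ih hndt (u ++ v) hnd' hlt' hmem' hsort'
      have hub : ∀ a ∈ u, (c a).2 / (c a).1 ≤ (c b).2 / (c b).1 := by
        intro a ha
        have := (List.pairwise_append.mp (by
          simpa [List.map_append] using hsort)).2.2
        exact this _ (List.mem_map_of_mem ha) _
          (by simp)
      calc listCost ((u ++ b :: v).map c) E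
          ≤ listCost ((b :: (u ++ v)).map c) E := cost_bubble c hP E b u v hub
        _ = (c b).2 + (1 - (c b).1) * listCost ((u ++ v).map c) E := rfl
        _ ≤ (c b).2 + (1 - (c b).1) * listCost (t.map c) E := by nlinarith
        _ = listCost ((b :: t).map c) E := rfl
    · -- r b ≥ E : drop b
      have hmem' : ∀ i ∈ t, (c i).2 / (c i).1 < E → i ∈ ls :=
        fun i hi h => hmem i (List.mem_cons_of_mem _ hi) h
      have hIH := ih hndt ls hndls hlt hmem' hsort
      have hlsE : listCost (ls.map c) E ≤ E := cost_le_E c hP E ls hlt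
      have hμb : E * (c b).1 ≤ (c b).2 := (le_div_iff₀ hPb).mp hrb
      have : listCost ((b :: t).map c) E
          = (c b).2 + (1 - (c b).1) * listCost (t.map c) E := rfl
      rw [this]
      nlinarith

end CoinAux

/-- Lemma 3: when the player may stop at any time, an optimal strategy for one-time
simple coins `c_1, …, c_n` and penalty `E > 0` is to toss exactly the coins whose
rate is smaller than `E`, in nondecreasing order of rate: such a list `l*` has
cost at most that of any list of pairwise distinct coins chosen from the set. -/
theorem optimal_strategy_rates_below_penalty_sorted
    (n : ℕ) (c : Fin n → ℝ × ℝ)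
    (hP : ∀ i, 0 < (c i).1 ∧ (c i).1 < 1) (hμ : ∀ i, 0 ≤ (c i).2)
    (E : ℝ) (hE : 0 < E)
    (lstar : List (Fin n))
    (hnodup : lstar.Nodup)
    (hmem : ∀ i : Fin n, i ∈ lstar ↔ (c i).2 / (c i).1 < E)
    (hsorted : (lstar.map (fun i => (c i).2 / (c i).1)).Pairwise (· ≤ ·)) :
    ∀ l : List (Fin n), l.Nodup →
      listCost (lstar.map c) E ≤ listCost (l.map c) E := by
  intro l hl
  exact CoinAux.main c hP hμ E hE l hl lstar hnodup
    (fun i hi => (hmem i).mp hi) (fun i _ h => (hmem i).mpr h) hsorted
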